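/- Let P be the orthogonal projection in L²(S¹) onto the closed span of {e^{2πint} : n ≥ 1} (the positive Fourier modes). For f ∈ C^∞(S¹) acting as a multiplication operator, the commutator [P, f] is a trace-class operator (indeed its matrix coefficients decay rapidly). -/

import Mathlib

open Complex Real

/-- The `k`-th Fourier coefficient of a `1`-periodic function `f : ℝ → ℂ`. -/
noncomputable def fourierC (f : ℝ → ℂ) (k : ℤ) : ℂ :=
  ∫ t in (0:ℝ)..1, f t * Complex.exp (-2 * Real.pi * Complex.I * k * t)

lemma fourierC_eq (f : ℝ → ℂ) (k : ℤ) :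
    fourierC f k = fourierCoeffOn zero_lt_one f k := by
  rw [fourierCoeffOn_eq_integral]
  simp only [sub_zero, div_one, one_smul, smul_eq_mul, fourier_coe_apply, fourierC]
  congr 1; ext t
  rw [mul_comm]
  congr 1
  push_cast
  ring_nf

lemma step_aux (g : ℝ → ℂ) (hg : ContDiff ℝ (⊤:ℕ∞) g) (hper : Function.Periodic g 1)
    {k : ℤ} (hk : k ≠ 0) :
    ‖fourierCoeffOn zero_lt_one g k‖
      = 1 / (2 * π * |(k:ℝ)|) * ‖fourierCoeffOn zero_lt_one (deriv g) k‖ := by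
  have hd : Differentiable ℝ g := hg.differentiable (by simp)
  have hderiv : ∀ x ∈ Set.uIcc (0:ℝ) 1, HasDerivAt g (deriv g x) x := fun x _ =>
    hd.differentiableAt.hasDerivAt
  have hint : IntervalIntegrable (deriv g) MeasureTheory.volume 0 1 :=
    ((hg.continuous_deriv (by exact_mod_cast le_top)).intervalIntegrable 0 1)
  rw [fourierCoeffOn_of_hasDerivAt zero_lt_one hk hderiv hint]
  have h10 : g 1 = g 0 := by simpa using hper 0
  rw [h10]
  simp only [sub_self, mul_zero, zero_sub, norm_mul, norm_neg, ofReal_zero, sub_zero,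
    ofReal_one, one_mul]
  congr 1
  rw [norm_div, norm_one]
  congr 1
  have : (-2 * ↑π * I * (k:ℂ)) = ((-2 : ℂ)) * (π:ℂ) * I * ((k:ℤ):ℂ) := by ring
  rw [this]
  simp [norm_mul, Complex.norm_intCast, abs_of_pos Real.pi_pos]

lemma coeff_bound (g : ℝ → ℂ) (C : ℝ) (hC : ∀ x ∈ Set.Icc (0:ℝ) 1, ‖g x‖ ≤ C) (k : ℤ) :
    ‖fourierCoeffOn zero_lt_one g k‖ ≤ C := by
  rw [fourierCoeffOn_eq_integral]
  simp only [sub_zero, div_one, one_smul, smul_eq_mul]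
  have := intervalIntegral.norm_integral_le_of_norm_le_const (C := C)
    (f := fun x : ℝ => fourier (-k) (x : AddCircle (1:ℝ)) * g x) (a := 0) (b := 1) ?_
  · simpa using this
  · intro x hx
    rw [Set.uIoc_of_le zero_le_one] at hx
    rw [norm_mul]
    have h1 : ‖fourier (-k) ((x:ℝ) : AddCircle (1:ℝ))‖ = 1 := by
      rw [fourier_apply]; exact Circle.norm_coe _
    rw [h1, one_mul]
    exact hC x ⟨hx.1.le, hx.2⟩

lemma periodic_deriv' (g : ℝ → ℂ) (hper : Function.Periodic g 1) :
    Function.Periodic (deriv g) 1 := by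
  intro x
  rw [← deriv_comp_add_const]
  congr 1
  ext y
  exact hper y

lemma fourierC_decay (f : ℝ → ℂ) (hf : ContDiff ℝ (⊤ : ℕ∞) f)
    (hper : Function.Periodic f 1) :
    ∃ C : ℝ, 0 ≤ C ∧ ∀ k : ℤ, k ≠ 0 → ‖fourierC f k‖ ≤ C / (k:ℝ)^4 := by
  set g1 := deriv f with hg1
  set g2 := deriv g1 with hg2
  set g3 := deriv g2 with hg3
  set g4 := deriv g3 with hg4
  have hf' : ContDiff ℝ ((⊤:ℕ∞) : WithTop ℕ∞) f := hf
  have h1 : ContDiff ℝ ((⊤:ℕ∞) : WithTop ℕ∞) g1 := (contDiff_infty_iff_deriv.mp hf').2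
  have h2 : ContDiff ℝ ((⊤:ℕ∞) : WithTop ℕ∞) g2 := (contDiff_infty_iff_deriv.mp h1).2
  have h3 : ContDiff ℝ ((⊤:ℕ∞) : WithTop ℕ∞) g3 := (contDiff_infty_iff_deriv.mp h2).2
  have h4 : ContDiff ℝ ((⊤:ℕ∞) : WithTop ℕ∞) g4 := (contDiff_infty_iff_deriv.mp h3).2
  have p1 : Function.Periodic g1 1 := periodic_deriv' f hper
  have p2 : Function.Periodic g2 1 := periodic_deriv' g1 p1
  have p3 : Function.Periodic g3 1 := periodic_deriv' g2 p2
  obtain ⟨C, hC⟩ := (isCompact_Icc (a := (0:ℝ)) (b := 1)).exists_bound_of_continuousOn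
    (h4.continuous.continuousOn)
  have hC0 : 0 ≤ C := le_trans (norm_nonneg _) (hC 0 ⟨le_refl _, zero_le_one⟩)
  refine ⟨C, hC0, fun k hk => ?_⟩
  have hkpos : (1:ℝ) ≤ |(k:ℝ)| := by
    rw [← Int.cast_abs]
    exact_mod_cast Int.one_le_abs hk
  have habs : 0 < |(k:ℝ)| := lt_of_lt_of_le zero_lt_one hkpos
  have hfac : (1:ℝ) / (2 * π * |(k:ℝ)|) ≤ 1 / |(k:ℝ)| := by
    apply div_le_div_of_nonneg_left zero_le_one habs
    nlinarith [Real.pi_gt_three]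
  have key : ‖fourierC f k‖ ≤ (1 / |(k:ℝ)|)^4 * C := by
    rw [fourierC_eq, step_aux f hf hper hk, step_aux g1 h1 p1 hk, step_aux g2 h2 p2 hk,
      step_aux g3 h3 p3 hk]
    have hb : ‖fourierCoeffOn zero_lt_one g4 k‖ ≤ C := coeff_bound g4 C hC k
    have hfacpos : (0:ℝ) ≤ 1 / (2 * π * |(k:ℝ)|) := by positivity
    calc 1 / (2 * π * |(k:ℝ)|) * (1 / (2 * π * |(k:ℝ)|) * (1 / (2 * π * |(k:ℝ)|) *
            (1 / (2 * π * |(k:ℝ)|) * ‖fourierCoeffOn zero_lt_one g4 k‖)))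
        ≤ 1 / (2 * π * |(k:ℝ)|) * (1 / (2 * π * |(k:ℝ)|) * (1 / (2 * π * |(k:ℝ)|) *
            (1 / (2 * π * |(k:ℝ)|) * C))) := by
          gcongr
      _ ≤ 1 / |(k:ℝ)| * (1 / |(k:ℝ)| * (1 / |(k:ℝ)| * (1 / |(k:ℝ)| * C))) := by
          gcongr
      _ = (1 / |(k:ℝ)|)^4 * C := by ring
  calc ‖fourierC f k‖ ≤ (1 / |(k:ℝ)|)^4 * C := key
    _ = C / (k:ℝ)^4 := by
        have h4' : |(k:ℝ)|^4 = (k:ℝ)^4 := by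
          rw [← _root_.abs_pow]; exact abs_of_nonneg (by positivity)
        rw [div_pow, one_pow, h4']
        ring

lemma base_summable : Summable (fun n : ℕ => 1/((n:ℝ)+1)^2) := by
  have := (summable_nat_add_iff 1).mpr (Real.summable_one_div_nat_pow.mpr one_lt_two)
  apply this.congr
  intro n
  push_cast
  ring

set_option maxHeartbeats 1000000 in
lemma prod_summable' : Summable (fun p : ℕ×ℕ => (1/((p.1:ℝ)+1)^2) * (1/((p.2:ℝ)+1)^2)) :=
  base_summable.mul_of_nonneg base_summable (Pi.le_def.mpr fun n => by positivity)
    (Pi.le_def.mpr fun n => by positivity)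

lemma prod_summable (C : ℝ) (hC : 0 ≤ C) :
    Summable (fun p : ℕ × ℕ => C / ((p.1:ℝ) + (p.2:ℝ) + 1)^4) := by
  apply Summable.of_nonneg_of_le (fun p => by positivity)
    (fun p => ?_) (prod_summable'.mul_left C)
  rcases p with ⟨a, b⟩
  simp only
  rw [div_eq_mul_inv]
  gcongr C * ?_
  rw [one_div, one_div, ← mul_inv]
  apply inv_anti₀ (by positivity)
  have ha : (0:ℝ) ≤ (a:ℝ) := Nat.cast_nonneg a
  have hb : (0:ℝ) ≤ (b:ℝ) := Nat.cast_nonneg b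
  have h1 : ((a:ℝ)+1)*((b:ℝ)+1) ≤ ((a:ℝ)+(b:ℝ)+1)^2 := by nlinarith [mul_nonneg ha hb]
  calc ((a:ℝ)+1)^2*((b:ℝ)+1)^2 = (((a:ℝ)+1)*((b:ℝ)+1))^2 := by ring
    _ ≤ (((a:ℝ)+(b:ℝ)+1)^2)^2 := by
        apply pow_le_pow_left₀ (by positivity) h1
    _ = ((a:ℝ)+(b:ℝ)+1)^4 := by ring

lemma B1_summable (C : ℝ) (hC : 0 ≤ C) :
    Summable (fun p : ℤ × ℤ =>
      if 1 ≤ p.2 ∧ p.1 ≤ 0 then C / ((p.2 - p.1 : ℤ):ℝ)^4 else 0) := by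
  set B : ℤ × ℤ → ℝ := fun p =>
    if 1 ≤ p.2 ∧ p.1 ≤ 0 then C / ((p.2 - p.1 : ℤ):ℝ)^4 else 0 with hB
  set ι : ℕ × ℕ → ℤ × ℤ := fun q => (-(q.1:ℤ), (q.2:ℤ)+1) with hι
  have hinj : Function.Injective ι := by
    intro q q' h
    simp only [hι, Prod.mk.injEq, neg_inj, Int.natCast_inj, add_left_inj] at h
    exact Prod.ext h.1 h.2
  have hvanish : ∀ p ∉ Set.range ι, B p = 0 := by
    intro p hp
    rw [hB]
    simp only
    rw [if_neg]
    intro ⟨h2, h1⟩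
    exact hp ⟨((-p.1).toNat, (p.2 - 1).toNat),
      Prod.ext_iff.mpr ⟨by simp [hι]; omega, by simp [hι]; omega⟩⟩
  rw [← Function.Injective.summable_iff hinj hvanish]
  apply (prod_summable C hC).congr
  intro q
  rcases q with ⟨a, b⟩
  simp only [hB, hι, Function.comp_apply]
  rw [if_pos ⟨by omega, by omega⟩]
  congr 2
  push_cast
  ring

/-!
STATEMENT 10: Let `P` be the orthogonal projection of `L²(S¹)` onto the span of the
positive Fourier modes `{e^{2πint} : n ≥ 1}`, and let `f ∈ C^∞(S¹)` act by
multiplication.  In the Fourier basis `(e_m)_{m∈ℤ}` the matrix coefficient of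
`[P, f]` at `(m,n)` is `(χ_{n≥1} - χ_{m≥1})·\hat f(n-m)`; these coefficients are
absolutely summable (they decay rapidly), i.e. `[P,f]` is trace class.
-/
theorem stmt_10 (f : ℝ → ℂ) (hf : ContDiff ℝ (⊤ : ℕ∞) f)
    (hper : Function.Periodic f 1) :
    Summable (fun p : ℤ × ℤ =>
      ‖(if 1 ≤ p.2 then (1 : ℂ) else 0) * fourierC f (p.2 - p.1)
        - fourierC f (p.2 - p.1) * (if 1 ≤ p.1 then (1 : ℂ) else 0)‖) := by
  obtain ⟨C, hC0, hdecay⟩ := fourierC_decay f hf hper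
  set B1 : ℤ × ℤ → ℝ := fun p =>
    if 1 ≤ p.2 ∧ p.1 ≤ 0 then C / ((p.2 - p.1 : ℤ):ℝ)^4 else 0 with hB1
  set B2 : ℤ × ℤ → ℝ := fun p =>
    if 1 ≤ p.1 ∧ p.2 ≤ 0 then C / ((p.2 - p.1 : ℤ):ℝ)^4 else 0 with hB2
  have hB1s : Summable B1 := B1_summable C hC0
  have hB2s : Summable B2 := by
    have hswap : Summable (B1 ∘ (Equiv.prodComm ℤ ℤ)) :=
      ((Equiv.prodComm ℤ ℤ).summable_iff).mpr hB1s
    apply hswap.congr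
    intro p
    rcases p with ⟨m, n⟩
    simp only [hB1, hB2, Function.comp_apply, Equiv.prodComm_apply, Prod.swap_prod_mk]
    by_cases h : 1 ≤ m ∧ n ≤ 0
    · rw [if_pos h]; refine (if_pos h).trans ?_
      congr 1
      push_cast
      ring
    · rw [if_neg h]; exact if_neg h
  have hnonneg1 : ∀ p, 0 ≤ B1 p := by
    intro p
    rw [hB1]
    dsimp only
    split
    · positivity
    · exact le_rfl
  have hnonneg2 : ∀ p, 0 ≤ B2 p := by
    intro p
    rw [hB2]
    dsimp only
    split
    · positivity
    · exact le_rfl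
  apply Summable.of_nonneg_of_le (fun p => norm_nonneg _) ?_ (hB1s.add hB2s)
  rintro ⟨m, n⟩
  by_cases h1 : 1 ≤ m <;> by_cases h2 : 1 ≤ n
  · simp only [if_pos h1, if_pos h2, one_mul, mul_one, sub_self, norm_zero]
    exact add_nonneg (hnonneg1 _) (hnonneg2 _)
  · -- 1 ≤ m, n ≤ 0 : term = ‖F‖ ≤ B2
    have hn0 : n ≤ 0 := by omega
    have hk : n - m ≠ 0 := by omega
    simp only [if_pos h1, if_neg h2, zero_mul, mul_one, zero_sub, norm_neg]
    have : B2 (m, n) = C / (((n - m : ℤ)):ℝ)^4 := by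
      rw [hB2]; exact if_pos ⟨h1, hn0⟩
    calc ‖fourierC f (n - m)‖ ≤ C / (((n - m : ℤ)):ℝ)^4 := hdecay _ hk
      _ = B2 (m, n) := this.symm
      _ ≤ B1 (m, n) + B2 (m, n) := le_add_of_nonneg_left (hnonneg1 _)
  · -- m ≤ 0, 1 ≤ n : term = ‖F‖ ≤ B1
    have hm0 : m ≤ 0 := by omega
    have hk : n - m ≠ 0 := by omega
    simp only [if_pos h2, if_neg h1, one_mul, mul_zero, sub_zero]
    have : B1 (m, n) = C / (((n - m : ℤ)):ℝ)^4 := by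
      rw [hB1]; exact if_pos ⟨h2, hm0⟩
    calc ‖fourierC f (n - m)‖ ≤ C / (((n - m : ℤ)):ℝ)^4 := hdecay _ hk
      _ = B1 (m, n) := this.symm
      _ ≤ B1 (m, n) + B2 (m, n) := le_add_of_nonneg_right (hnonneg2 _)
  · simp only [if_neg h1, if_neg h2, zero_mul, mul_zero, sub_self, norm_zero]
    exact add_nonneg (hnonneg1 _) (hnonneg2 _)
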